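/- arXiv:1610.02611 — 2 statements merged into one kernel-verified Lean document; each statement's English description precedes it below -/
import Mathlib

section
/- Let n ≥ 1 be a natural number and define F_n(w) = √(a_n(w) c_n(w) (a_n(w) c_n(w) − b_n(w)²)) / (2 w a_n(w)²). Then for every real w > 0 with w ≠ 1, F_n(w) ≤ n / (2 √w |1 − w|). -/
open Finset

/-- `aP k w = ∑_{j=0}^k w^j` -/
noncomputable def aP (k : ℕ) (w : ℝ) : ℝ := ∑ j ∈ range (k + 1), w ^ j

/-- `bP k w = ∑_{j=1}^k j w^j` -/
noncomputable def bP (k : ℕ) (w : ℝ) : ℝ := ∑ j ∈ range (k + 1), (j : ℝ) * w ^ j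

/-- `cP k w = ∑_{j=1}^k j² w^j` -/
noncomputable def cP (k : ℕ) (w : ℝ) : ℝ := ∑ j ∈ range (k + 1), (j : ℝ) ^ 2 * w ^ j

lemma aP_tel (n : ℕ) (w : ℝ) : (1 - w) * aP n w = 1 - w ^ (n + 1) := by
  induction n with
  | zero => simp [aP]
  | succ k ih =>
      have h : aP (k + 1) w = aP k w + w ^ (k + 1) := Finset.sum_range_succ _ _
      rw [h]; linear_combination ih

lemma bP_tel (n : ℕ) (w : ℝ) :
    (1 - w) * bP n w = aP n w - 1 - (n : ℝ) * w ^ (n + 1) := by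
  induction n with
  | zero => simp [aP, bP]
  | succ k ih =>
      have hb : bP (k + 1) w = bP k w + ((k : ℝ) + 1) * w ^ (k + 1) := by
        have := Finset.sum_range_succ (fun j => (j : ℝ) * w ^ j) (k + 1)
        rw [bP, this, ← bP]; push_cast; ring
      have ha : aP (k + 1) w = aP k w + w ^ (k + 1) := Finset.sum_range_succ _ _
      rw [hb, ha]; push_cast; linear_combination ih

lemma cP_tel (n : ℕ) (w : ℝ) :
    (1 - w) * cP n w = 2 * bP n w - aP n w + 1 - (n : ℝ) ^ 2 * w ^ (n + 1) := by
  induction n with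
  | zero => simp [aP, bP, cP]
  | succ k ih =>
      have hc : cP (k + 1) w = cP k w + ((k : ℝ) + 1) ^ 2 * w ^ (k + 1) := by
        have := Finset.sum_range_succ (fun j => (j : ℝ) ^ 2 * w ^ j) (k + 1)
        rw [cP, this, ← cP]; push_cast; ring
      have hb : bP (k + 1) w = bP k w + ((k : ℝ) + 1) * w ^ (k + 1) := by
        have := Finset.sum_range_succ (fun j => (j : ℝ) * w ^ j) (k + 1)
        rw [bP, this, ← bP]; push_cast; ring
      have ha : aP (k + 1) w = aP k w + w ^ (k + 1) := Finset.sum_range_succ _ _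
      rw [hc, hb, ha]; push_cast; linear_combination ih

/-- The key polynomial identity: `(1-w)²(ac - b²) = w a² - (n+1)² wⁿ⁺¹`. -/
lemma key_identity (n : ℕ) (w : ℝ) :
    (1 - w) ^ 2 * (aP n w * cP n w - bP n w ^ 2)
      = w * aP n w ^ 2 - ((n : ℝ) + 1) ^ 2 * w ^ (n + 1) := by
  linear_combination (1 - (n : ℝ) ^ 2 * w ^ (n + 1)) * aP_tel n w
    + (aP n w + 1 + (n : ℝ) * w ^ (n + 1) - (1 - w) * bP n w) * bP_tel n w
    + ((1 - w) * aP n w) * cP_tel n w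

/-- The first-intensity integrand for the naive model with `m = n`. -/
noncomputable def F (n : ℕ) (w : ℝ) : ℝ :=
  Real.sqrt (aP n w * cP n w * (aP n w * cP n w - bP n w ^ 2)) / (2 * w * aP n w ^ 2)

/-- For `n ≥ 1` and `w > 0`, `w ≠ 1`: `Fₙ(w) ≤ n/(2√w |1 − w|)`. -/
theorem F_upper_bound (n : ℕ) (hn : 1 ≤ n) (w : ℝ) (hw : 0 < w) (hw1 : w ≠ 1) :
    F n w ≤ (n : ℝ) / (2 * Real.sqrt w * |1 - w|) := by
  have hu : (1 : ℝ) - w ≠ 0 := sub_ne_zero.mpr (Ne.symm hw1)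
  have hu2 : 0 < (1 - w) ^ 2 := by positivity
  have ha_pos : 0 < aP n w := by
    apply Finset.sum_pos (fun j _ => pow_pos hw j)
    exact Finset.nonempty_range_iff.mpr (Nat.succ_ne_zero n)
  have hb_nonneg : 0 ≤ bP n w := by
    apply Finset.sum_nonneg
    intro j _
    positivity
  have hb_le : bP n w ≤ (n : ℝ) * aP n w := by
    rw [aP, Finset.mul_sum, bP]
    apply Finset.sum_le_sum
    intro j hj
    have hjn : (j : ℝ) ≤ (n : ℝ) := by
      exact_mod_cast Nat.lt_succ_iff.mp (Finset.mem_range.mp hj)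
    exact mul_le_mul_of_nonneg_right hjn (pow_pos hw j).le
  have hc_le : cP n w ≤ (n : ℝ) * bP n w := by
    rw [bP, Finset.mul_sum, cP]
    apply Finset.sum_le_sum
    intro j hj
    have hjn : (j : ℝ) ≤ (n : ℝ) := by
      exact_mod_cast Nat.lt_succ_iff.mp (Finset.mem_range.mp hj)
    have hjw : (0:ℝ) ≤ (j : ℝ) * w ^ j := by positivity
    calc (j : ℝ) ^ 2 * w ^ j = (j : ℝ) * ((j : ℝ) * w ^ j) := by ring
      _ ≤ (n : ℝ) * ((j : ℝ) * w ^ j) := mul_le_mul_of_nonneg_right hjn hjw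
  -- Cauchy–Schwarz: `b² ≤ a c`
  have hcs : bP n w ^ 2 ≤ aP n w * cP n w := by
    have := Finset.sum_mul_sq_le_sq_mul_sq (range (n + 1))
      (fun j => Real.sqrt (w ^ j)) (fun j => (j : ℝ) * Real.sqrt (w ^ j))
    have e1 : ∀ j ∈ range (n + 1),
        Real.sqrt (w ^ j) * ((j : ℝ) * Real.sqrt (w ^ j)) = (j : ℝ) * w ^ j := by
      intro j _
      rw [show Real.sqrt (w ^ j) * ((j : ℝ) * Real.sqrt (w ^ j))
            = (j : ℝ) * (Real.sqrt (w ^ j) * Real.sqrt (w ^ j)) by ring,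
          Real.mul_self_sqrt (pow_pos hw j).le]
    have e2 : ∀ j ∈ range (n + 1), Real.sqrt (w ^ j) ^ 2 = w ^ j := by
      intro j _; exact Real.sq_sqrt (pow_pos hw j).le
    have e3 : ∀ j ∈ range (n + 1),
        ((j : ℝ) * Real.sqrt (w ^ j)) ^ 2 = (j : ℝ) ^ 2 * w ^ j := by
      intro j _; rw [mul_pow, Real.sq_sqrt (pow_pos hw j).le]
    rw [Finset.sum_congr rfl e1, Finset.sum_congr rfl e2, Finset.sum_congr rfl e3] at this
    calc bP n w ^ 2 = (∑ j ∈ range (n + 1), (j : ℝ) * w ^ j) ^ 2 := by rw [bP]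
      _ ≤ (∑ j ∈ range (n + 1), w ^ j) * ∑ j ∈ range (n + 1), (j : ℝ) ^ 2 * w ^ j := this
      _ = aP n w * cP n w := by rw [aP, cP]
  -- variance bound
  have hvar : aP n w * cP n w - bP n w ^ 2 ≤ w * aP n w ^ 2 / (1 - w) ^ 2 := by
    rw [le_div_iff₀ hu2]
    have hkey := key_identity n w
    nlinarith [pow_pos hw (n + 1), sq_nonneg ((n : ℝ) + 1)]
  -- second moment bound
  have hac_le : aP n w * cP n w ≤ (n : ℝ) ^ 2 * aP n w ^ 2 := by
    calc aP n w * cP n w ≤ aP n w * ((n : ℝ) * bP n w) :=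
          mul_le_mul_of_nonneg_left hc_le ha_pos.le
      _ ≤ aP n w * ((n : ℝ) * ((n : ℝ) * aP n w)) := by
          apply mul_le_mul_of_nonneg_left _ ha_pos.le
          exact mul_le_mul_of_nonneg_left hb_le (Nat.cast_nonneg n)
      _ = (n : ℝ) ^ 2 * aP n w ^ 2 := by ring
  have hsw : 0 < Real.sqrt w := Real.sqrt_pos.mpr hw
  have habs : 0 < |1 - w| := abs_pos.mpr hu
  set T := (n : ℝ) * Real.sqrt w * aP n w ^ 2 / |1 - w| with hT
  have hT_nonneg : 0 ≤ T := by positivity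
  have hT_sq : T ^ 2 = (n : ℝ) ^ 2 * w * aP n w ^ 4 / (1 - w) ^ 2 := by
    rw [hT, div_pow, mul_pow, mul_pow, Real.sq_sqrt hw.le, sq_abs]
    ring_nf
  have hsqrt : Real.sqrt (aP n w * cP n w * (aP n w * cP n w - bP n w ^ 2)) ≤ T := by
    rw [show T = Real.sqrt (T ^ 2) by rw [Real.sqrt_sq hT_nonneg]]
    apply Real.sqrt_le_sqrt
    rw [hT_sq]
    calc aP n w * cP n w * (aP n w * cP n w - bP n w ^ 2)
        ≤ (n : ℝ) ^ 2 * aP n w ^ 2 * (w * aP n w ^ 2 / (1 - w) ^ 2) := by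
          apply mul_le_mul hac_le hvar (by linarith) (by positivity)
      _ = (n : ℝ) ^ 2 * w * aP n w ^ 4 / (1 - w) ^ 2 := by ring
  have hfin : T / (2 * w * aP n w ^ 2) = (n : ℝ) / (2 * Real.sqrt w * |1 - w|) := by
    rw [hT]
    have hww : Real.sqrt w * Real.sqrt w = w := Real.mul_self_sqrt hw.le
    rw [div_div, eq_div_iff (by positivity)]
    field_simp
    linear_combination hww
  have hden : 0 < 2 * w * aP n w ^ 2 := by positivity
  calc F n w ≤ T / (2 * w * aP n w ^ 2) := (div_le_div_iff_of_pos_right hden).mpr hsqrt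
    _ = (n : ℝ) / (2 * Real.sqrt w * |1 - w|) := hfin
end

section
/- Let α = 1 − e/(e − 1)². There exists a natural number N such that for every n ≥ N and every real w ≥ 1 + 1/n, F_n(w) ≥ (√α/(8√2)) · n / (√w (w − 1)), where F_n(w) = √(a_n(w) c_n(w) (a_n(w) c_n(w) − b_n(w)²)) / (2 w a_n(w)²). -/
open Finset Real

lemma aP_eq {w : ℝ} (hw : w ≠ 1) (n : ℕ) : aP n w = (w ^ (n+1) - 1)/(w - 1) :=
  geom_sum_eq hw (n+1)

lemma aP_pos {w : ℝ} (hw : 0 < w) (n : ℕ) : 0 < aP n w := by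
  apply Finset.sum_pos (fun i _ => pow_pos hw i) (by simp)

lemma cs_ineq {w : ℝ} (hw : 0 ≤ w) (n : ℕ) : bP n w ^ 2 ≤ aP n w * cP n w := by
  have h := Finset.sum_mul_sq_le_sq_mul_sq (range (n+1))
    (fun i => Real.sqrt w ^ i) (fun i => (i : ℝ) * Real.sqrt w ^ i)
  have e1 : ∀ i : ℕ, Real.sqrt w ^ i * ((i:ℝ) * Real.sqrt w ^ i) = (i:ℝ) * w ^ i := by
    intro i
    rw [show Real.sqrt w ^ i * ((i:ℝ) * Real.sqrt w ^ i) = (i:ℝ) * (Real.sqrt w * Real.sqrt w) ^ i by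
      rw [mul_pow]; ring, Real.mul_self_sqrt hw]
  have e2 : ∀ i : ℕ, (Real.sqrt w ^ i) ^ 2 = w ^ i := by
    intro i; rw [← pow_mul, mul_comm i 2, pow_mul, Real.sq_sqrt hw]
  have e3 : ∀ i : ℕ, ((i:ℝ) * Real.sqrt w ^ i) ^ 2 = (i:ℝ)^2 * w ^ i := by
    intro i; rw [mul_pow, e2]
  simp only [e1, e2, e3] at h
  exact h

lemma half_le {w : ℝ} (hw : 1 ≤ w) (n : ℕ) : (n : ℝ) * aP n w ≤ 2 * bP n w := by
  have key : 0 ≤ ∑ j ∈ range (n+1), (2*(j:ℝ) - n) * (w ^ j - w ^ (n - j)) := by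
    apply Finset.sum_nonneg
    intro j hj
    have hjn : j ≤ n := by simpa [Nat.lt_succ_iff] using hj
    rcases le_or_gt (2*j) n with h | h
    · have h1 : (2*(j:ℝ)) - n ≤ 0 := by
        have : (2*(j:ℝ)) ≤ n := by exact_mod_cast h
        linarith
      have h2 : w ^ j - w ^ (n - j) ≤ 0 := by
        have : w ^ j ≤ w ^ (n - j) := pow_le_pow_right₀ hw (by omega)
        linarith
      nlinarith [mul_nonneg (neg_nonneg.2 h1) (neg_nonneg.2 h2)]
    · apply mul_nonneg
      · have : (n:ℝ) < 2*(j:ℝ) := by exact_mod_cast h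
        linarith
      · have : w ^ (n - j) ≤ w ^ j := pow_le_pow_right₀ hw (by omega)
        linarith
  have refl1 : ∑ j ∈ range (n+1), (2*((n - j : ℕ):ℝ) - n) * w ^ (n - j)
      = ∑ j ∈ range (n+1), (2*(j:ℝ) - n) * w ^ j := by
    have := Finset.sum_range_reflect (fun j => (2*(j:ℝ) - n) * w ^ j) (n+1)
    simpa using this
  have cast1 : ∀ j ∈ range (n+1), (2*((n - j : ℕ):ℝ) - n) * w ^ (n - j)
      = ((n:ℝ) - 2*j) * w ^ (n-j) := by
    intro j hj
    have hjn : j ≤ n := by simpa [Nat.lt_succ_iff] using hj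
    rw [Nat.cast_sub hjn]; ring_nf
  rw [Finset.sum_congr rfl cast1] at refl1
  have expand : ∑ j ∈ range (n+1), (2*(j:ℝ) - n) * (w ^ j - w ^ (n - j))
      = 2 * (∑ j ∈ range (n+1), (2*(j:ℝ) - n) * w ^ j) := by
    rw [two_mul]
    nth_rewrite 2 [← refl1]
    rw [← Finset.sum_add_distrib]
    apply Finset.sum_congr rfl
    intro j _; ring
  rw [expand] at key
  have : 0 ≤ ∑ j ∈ range (n+1), (2*(j:ℝ) - n) * w ^ j := by linarith
  have split : ∑ j ∈ range (n+1), (2*(j:ℝ) - n) * w ^ j = 2 * bP n w - n * aP n w := by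
    rw [bP, aP, Finset.mul_sum, Finset.mul_sum, ← Finset.sum_sub_distrib]
    apply Finset.sum_congr rfl; intro j _; ring
  linarith [split ▸ this]

lemma Dsum (w : ℝ) (n : ℕ) :
    2 * (aP n w * cP n w - bP n w ^ 2)
      = ∑ j ∈ range (n+1), ∑ k ∈ range (n+1), ((k:ℝ) - j)^2 * w ^ (j+k) := by
  have L : ∀ (A B C : ℕ → ℝ) (s : Finset ℕ),
      (∑ k ∈ s, A k) + (∑ k ∈ s, B k) - 2 * (∑ k ∈ s, C k)
        = ∑ k ∈ s, (A k + B k - 2 * C k) := by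
    intros A B C s
    rw [Finset.mul_sum, ← Finset.sum_add_distrib, ← Finset.sum_sub_distrib]
  have prod1 : aP n w * cP n w = ∑ j ∈ range (n+1), ∑ k ∈ range (n+1), w ^ j * ((k:ℝ)^2 * w ^ k) := by
    rw [aP, cP, Finset.sum_mul_sum]
  have prod2 : cP n w * aP n w = ∑ j ∈ range (n+1), ∑ k ∈ range (n+1), ((j:ℝ)^2 * w ^ j) * w ^ k := by
    rw [aP, cP, Finset.sum_mul_sum]
  have prod3 : bP n w * bP n w = ∑ j ∈ range (n+1), ∑ k ∈ range (n+1), ((j:ℝ) * w ^ j) * ((k:ℝ) * w ^ k) := by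
    rw [bP, Finset.sum_mul_sum]
  calc 2 * (aP n w * cP n w - bP n w ^ 2)
      = aP n w * cP n w + cP n w * aP n w - 2 * (bP n w * bP n w) := by ring
    _ = ∑ j ∈ range (n+1), ((∑ k ∈ range (n+1), w ^ j * ((k:ℝ)^2 * w ^ k))
          + (∑ k ∈ range (n+1), ((j:ℝ)^2 * w ^ j) * w ^ k)
          - 2 * (∑ k ∈ range (n+1), ((j:ℝ) * w ^ j) * ((k:ℝ) * w ^ k))) := by
        rw [prod1, prod2, prod3, L]
    _ = ∑ j ∈ range (n+1), ∑ k ∈ range (n+1), ((k:ℝ) - j)^2 * w ^ (j+k) := by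
        apply Finset.sum_congr rfl; intro j _
        rw [L]
        apply Finset.sum_congr rfl; intro k _
        rw [pow_add]; ring

lemma D_ge {w : ℝ} (hw : 0 ≤ w) (n d : ℕ) (hd : 1 ≤ d) :
    (d:ℝ)^2 * ∑ k ∈ range (n+1), ∑ j ∈ range (k+1-d), w ^ (j+k)
      ≤ aP n w * cP n w - bP n w ^ 2 := by
  set f : ℕ → ℕ → ℝ := fun j k => ((k:ℝ) - j)^2 * w ^ (j+k) with hf
  set g : ℕ → ℕ → ℝ := fun j k => if j + d ≤ k then f j k else 0 with hg
  have hfnn : ∀ j k, 0 ≤ f j k := fun j k =>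
    mul_nonneg (sq_nonneg _) (pow_nonneg hw _)
  have hsymm : ∀ j k : ℕ, f k j = f j k := by
    intro j k
    simp only [hf]
    rw [show ((j:ℝ) - k)^2 = ((k:ℝ) - j)^2 by ring, Nat.add_comm k j]
  have hpt : ∀ j k : ℕ, g j k + g k j ≤ f j k := by
    intro j k
    rcases le_or_gt (j + d) k with h1 | h1
    · have h2 : ¬ (k + d ≤ j) := by omega
      simp only [hg, if_pos h1, if_neg h2, add_zero, le_refl]
    · rcases le_or_gt (k + d) j with h2 | h2
      · have h1' : ¬ (j + d ≤ k) := by omega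
        simp only [hg, if_neg h1', if_pos h2, zero_add, hsymm j k, le_refl]
      · have h1' : ¬ (j + d ≤ k) := by omega
        have h2' : ¬ (k + d ≤ j) := by omega
        simp only [hg, if_neg h1', if_neg h2', add_zero]
        exact hfnn j k
  have sum_ge : 2 * (∑ j ∈ range (n+1), ∑ k ∈ range (n+1), g j k)
      ≤ ∑ j ∈ range (n+1), ∑ k ∈ range (n+1), f j k := by
    have swap : ∑ j ∈ range (n+1), ∑ k ∈ range (n+1), g k j
        = ∑ j ∈ range (n+1), ∑ k ∈ range (n+1), g j k := Finset.sum_comm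
    calc 2 * (∑ j ∈ range (n+1), ∑ k ∈ range (n+1), g j k)
        = (∑ j ∈ range (n+1), ∑ k ∈ range (n+1), g j k)
          + ∑ j ∈ range (n+1), ∑ k ∈ range (n+1), g k j := by rw [swap]; ring
      _ = ∑ j ∈ range (n+1), ∑ k ∈ range (n+1), (g j k + g k j) := by
          rw [← Finset.sum_add_distrib]
          apply Finset.sum_congr rfl; intro j _
          rw [← Finset.sum_add_distrib]
      _ ≤ ∑ j ∈ range (n+1), ∑ k ∈ range (n+1), f j k := by
          apply Finset.sum_le_sum; intro j _
          apply Finset.sum_le_sum; intro k _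
          exact hpt j k
  have gsum : ∑ j ∈ range (n+1), ∑ k ∈ range (n+1), g j k
      = ∑ k ∈ range (n+1), ∑ j ∈ range (k+1-d), f j k := by
    rw [Finset.sum_comm]
    apply Finset.sum_congr rfl; intro k hk
    have hk' : k < n + 1 := Finset.mem_range.1 hk
    rw [show (∑ j ∈ range (n+1), g j k) = ∑ j ∈ (range (n+1)).filter (fun j => j + d ≤ k), f j k by
      rw [Finset.sum_filter]]
    congr 1
    ext j
    simp only [Finset.mem_filter, Finset.mem_range]
    omega
  have tstep : (d:ℝ)^2 * ∑ k ∈ range (n+1), ∑ j ∈ range (k+1-d), w ^ (j+k)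
      ≤ ∑ k ∈ range (n+1), ∑ j ∈ range (k+1-d), f j k := by
    rw [Finset.mul_sum]
    apply Finset.sum_le_sum; intro k _
    rw [Finset.mul_sum]
    apply Finset.sum_le_sum; intro j hj
    have hjk : j + d ≤ k := by
      have := Finset.mem_range.1 hj; omega
    have hdk : (d:ℝ) ≤ (k:ℝ) - j := by
      have : (j:ℝ) + d ≤ k := by exact_mod_cast hjk
      linarith
    have hsq : (d:ℝ)^2 ≤ ((k:ℝ) - j)^2 := by nlinarith [Nat.cast_nonneg (α := ℝ) d]
    exact mul_le_mul_of_nonneg_right hsq (pow_nonneg hw _)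
  rw [gsum] at sum_ge
  have hD := Dsum w n
  linarith

lemma U_eq {w : ℝ} (hw : 1 < w) (n d : ℕ) :
    ∑ k ∈ range (n+1), ∑ j ∈ range (k+1-d), w ^ (j+k)
      = w^d * (w^(n+1-d) - 1) * (w * w^(n+1-d) - 1) / ((w-1)^2 * (w+1)) ∨ n + 1 ≤ d := by
  rcases le_or_gt (n+1) d with h | h
  · exact Or.inr h
  left
  have hw1 : w ≠ 1 := ne_of_gt hw
  have hwm1 : w - 1 ≠ 0 := sub_ne_zero.2 (ne_of_gt hw)
  have hwp1 : w + 1 ≠ 0 := by nlinarith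
  have hw2 : w^2 ≠ 1 := by nlinarith
  have hw2m : w^2 - 1 ≠ 0 := sub_ne_zero.2 hw2
  set m := n + 1 - d with hm
  have hsplit : n + 1 = d + m := by omega
  rw [hsplit, Finset.sum_range_add]
  have h1 : ∑ k ∈ range d, ∑ j ∈ range (k+1-d), w^(j+k) = 0 := by
    apply Finset.sum_eq_zero; intro k hk
    have hk0 : k + 1 - d = 0 := by have := Finset.mem_range.1 hk; omega
    rw [hk0]; simp
  rw [h1, zero_add]
  have h2 : ∀ i ∈ range m, ∑ j ∈ range (d+i+1-d), w^(j+(d+i))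
      = (w^d/(w-1)) * (w*(w^2)^i - w^i) := by
    intro i _
    have hieq : d + i + 1 - d = i + 1 := by omega
    rw [hieq]
    have e1 : ∀ j, w^(j+(d+i)) = w^j * (w^d * w^i) := by
      intro j; rw [pow_add, pow_add]
    rw [Finset.sum_congr rfl (fun j _ => e1 j), ← Finset.sum_mul, geom_sum_eq hw1]
    have e2 : (w^2)^i = w^i * w^i := by rw [← pow_mul, mul_comm]; rw [pow_mul]; ring
    rw [e2]
    field_simp
    ring
  rw [Finset.sum_congr rfl h2, ← Finset.mul_sum]
  rw [Finset.sum_sub_distrib, ← Finset.mul_sum, geom_sum_eq hw2, geom_sum_eq hw1]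
  have e3 : (w^2)^m = w^m * w^m := by rw [← pow_mul, mul_comm]; rw [pow_mul]; ring
  rw [e3]
  have : w^2 - 1 = (w-1)*(w+1) := by ring
  rw [this]
  field_simp
  ring

lemma D_ge' {w : ℝ} (hw : 1 < w) {n d : ℕ} (hd : 1 ≤ d) (hdn : d ≤ n)
    (hKEY : (1/100)*w*(w+1)*(w^(n+1)-1)^2
      ≤ (d:ℝ)^2*(w-1)^2*(w^d*(w^(n+1-d)-1)*(w*w^(n+1-d)-1))) :
    (1/100)*w*(w^(n+1)-1)^2/(w-1)^4 ≤ aP n w * cP n w - bP n w ^ 2 := by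
  have hU := (U_eq hw n d).resolve_right (by omega)
  have hDge := D_ge (by linarith : (0:ℝ) ≤ w) n d hd
  rw [hU] at hDge
  refine le_trans ?_ hDge
  have h4 : (0:ℝ) < (w-1)^4 := by
    have h1 : 0 < w - 1 := by linarith
    positivity
  have hq : (0:ℝ) < (w-1)^2*(w+1) := by
    have h1 : 0 < w - 1 := by linarith
    have h2 : 0 < w + 1 := by linarith
    positivity
  rw [mul_div_assoc', div_le_div_iff₀ h4 hq]
  nlinarith [mul_le_mul_of_nonneg_right hKEY (sq_nonneg (w-1))]

lemma keyA {w : ℝ} {n : ℕ} (hn : 2 ≤ n) (hw : 2 ≤ w) :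
    (1/100)*w*(w+1)*(w^(n+1)-1)^2
      ≤ ((1:ℕ):ℝ)^2*(w-1)^2*(w^1*(w^(n+1-1)-1)*(w*w^(n+1-1)-1)) := by
  have hz : w^2 ≤ w^n := pow_le_pow_right₀ (by linarith) hn
  have hz4 : (4:ℝ) ≤ w^n := by nlinarith
  have hu : w^(n+1) = w * w^n := by rw [pow_succ]; ring
  have hn1 : n + 1 - 1 = n := by omega
  rw [hn1, hu]
  set z := w^n with hzdef
  have hw0 : (0:ℝ) < w := by linarith
  have c1 : (0:ℝ) ≤ (99/100)*w^2 - (201/100)*w + 1 := by nlinarith [sq_nonneg (w-2)]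
  have c3 : (0:ℝ) ≤ (99/100)*w^2 - (201/100)*w + 99/100 := by nlinarith [sq_nonneg (w-2)]
  have c2 : (0:ℝ) ≤ ((99/100)*w^2 - (201/100)*w + 1)*(z - w^2) :=
    mul_nonneg c1 (by linarith)
  have c4 : (0:ℝ) ≤ (w^2-1)*((99/100)*w^2 - (201/100)*w + 99/100) :=
    mul_nonneg (by nlinarith) c3
  have step : (1/100)*(w+1)*(w*z-1) ≤ (w-1)^2*(z-1) := by nlinarith [c2, c4]
  have hwz1 : (0:ℝ) < w*z - 1 := by nlinarith
  simp only [Nat.cast_one, one_pow, pow_one]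
  nlinarith [mul_le_mul_of_nonneg_right step (le_of_lt hwz1), mul_pos hw0 hwz1]

set_option maxHeartbeats 800000 in
lemma keyB1 {w : ℝ} {n : ℕ} (hw1 : 1 < w) (hw2 : w < 2)
    (hu : Real.exp 1 ^ 4 ≤ w^(n+1)) :
    ∃ d, 1 ≤ d ∧ d ≤ n ∧
      (1/100)*w*(w+1)*(w^(n+1)-1)^2
        ≤ (d:ℝ)^2*(w-1)^2*(w^d*(w^(n+1-d)-1)*(w*w^(n+1-d)-1)) := by
  have hw0 : (0:ℝ) < w := by linarith
  set E := Real.exp 1 with hE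
  have hE1 : (2.7182818283:ℝ) < E := Real.exp_one_gt_d9
  have hE2 : E < 2.7182818286 := Real.exp_one_lt_d9
  have hEsq : (7.389:ℝ) ≤ E^2 := by nlinarith
  have hE4 : (54:ℝ) ≤ E^4 := by nlinarith [hEsq, sq_nonneg (E^2)]
  have hu' : E^4 ≤ w^n * w := by rw [← pow_succ]; exact hu
  have hPn : E ≤ w ^ n := by
    nlinarith [mul_nonneg (pow_nonneg hw0.le n) (by linarith : (0:ℝ) ≤ 2 - w)]
  have hex : ∃ k, E ≤ w ^ k := ⟨n, hPn⟩
  obtain ⟨d, hd1, hdn, hPd, hmin⟩ : ∃ d : ℕ, 1 ≤ d ∧ d ≤ n ∧ E ≤ w^d ∧ w^(d-1) < E := by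
    classical
    refine ⟨Nat.find hex, ?_, Nat.find_min' hex hPn, Nat.find_spec hex, ?_⟩
    · rcases Nat.eq_zero_or_pos (Nat.find hex) with h0 | h0
      · exfalso
        have := Nat.find_spec hex
        rw [h0, pow_zero] at this
        linarith
      · exact h0
    · have h1 : 1 ≤ Nat.find hex := by
        rcases Nat.eq_zero_or_pos (Nat.find hex) with h0 | h0
        · exfalso
          have := Nat.find_spec hex
          rw [h0, pow_zero] at this
          linarith
        · exact h0
      have := Nat.find_min hex (m := Nat.find hex - 1) (by omega)
      linarith [not_le.1 this]
  set y := w ^ d with hy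
  have hy2E : y < 2*E := by
    have hyw : y = w^(d-1) * w := by rw [hy, ← pow_succ]; congr 1; omega
    nlinarith [pow_nonneg hw0.le (d-1)]
  set z := w ^ (n+1-d) with hz
  have huyz : w^(n+1) = y * z := by rw [hy, hz, ← pow_add]; congr 1; omega
  have hz0 : (0:ℝ) < z := pow_pos hw0 _
  have hy0 : (0:ℝ) < y := pow_pos hw0 _
  have h54 : (54:ℝ) ≤ y*z := by rw [← huyz]; linarith
  have hy54 : y ≤ 5.44 := by linarith
  have hz9 : (9:ℝ) ≤ z := by nlinarith [mul_nonneg (by linarith : (0:ℝ) ≤ 5.44 - y) hz0.le]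
  have hdw : 1 ≤ (d:ℝ) * (w-1) := by
    have l2 : Real.log E ≤ Real.log y := Real.log_le_log (Real.exp_pos 1) hPd
    have l3 : Real.log y = (d:ℝ) * Real.log w := by rw [hy, Real.log_pow]
    have l4 : Real.log w ≤ w - 1 := Real.log_le_sub_one_of_pos hw0
    have l5 : (d:ℝ) * Real.log w ≤ (d:ℝ) * (w-1) :=
      mul_le_mul_of_nonneg_left l4 (Nat.cast_nonneg d)
    have l1 : Real.log E = 1 := Real.log_exp 1
    linarith [l3 ▸ l2]
  refine ⟨d, hd1, hdn, ?_⟩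
  rw [show w^(n+1) = y*z from huyz, show w^d = y from hy.symm,
    show w^(n+1-d) = z from hz.symm]
  have hd0 : (1:ℝ) ≤ (d:ℝ) := by exact_mod_cast hd1
  clear_value y z
  clear hy hz huyz hu hu' hPn hex hPd hmin hE hE1 hE2 hEsq hE4
  have hu1 : (1:ℝ) ≤ y*z := by linarith
  have s1 : (y*z-1)^2 ≤ (y*z)^2 := by nlinarith
  have s2 : (1/100)*w*(w+1) ≤ 6/100 := by nlinarith
  have h1 : (1/100)*w*(w+1)*(y*z-1)^2 ≤ (6/100)*(y*z)^2 := by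
    have := mul_le_mul s2 s1 (sq_nonneg _) (by norm_num)
    nlinarith [this]
  have q1 : (8/9)*z ≤ z - 1 := by linarith
  have q2 : (8/9)*z ≤ w*z - 1 := by
    nlinarith [mul_nonneg (by linarith : (0:ℝ) ≤ w - 1) hz0.le]
  have q3 : ((8/9)*z)*((8/9)*z) ≤ (z-1)*(w*z-1) :=
    mul_le_mul q1 q2 (by linarith) (by linarith)
  have q4 : y*(((8/9)*z)*((8/9)*z)) ≤ y*((z-1)*(w*z-1)) :=
    mul_le_mul_of_nonneg_left q3 hy0.le
  have q5 : (0:ℝ) ≤ (64/81 - (6/100)*y) * (y * z^2) := by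
    apply mul_nonneg (by linarith) (mul_nonneg hy0.le (sq_nonneg z))
  have h2 : (6/100)*(y*z)^2 ≤ y*(z-1)*(w*z-1) := by nlinarith [q4, q5]
  have h3 : (1:ℝ) ≤ (d:ℝ)^2*(w-1)^2 := by
    have := mul_le_mul hdw hdw (by norm_num) (le_trans (by norm_num) hdw)
    nlinarith [this]
  have h4 : (0:ℝ) ≤ y*(z-1)*(w*z-1) := by
    apply mul_nonneg (mul_nonneg hy0.le (by linarith)) (by nlinarith)
  calc (1/100)*w*(w+1)*(y*z-1)^2 ≤ y*(z-1)*(w*z-1) := le_trans (le_trans h1 h2) (le_refl _)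
    _ ≤ ((d:ℝ)^2*(w-1)^2) * (y*(z-1)*(w*z-1)) := le_mul_of_one_le_left h4 h3
    _ = (d:ℝ)^2*(w-1)^2*(y*(z-1)*(w*z-1)) := by ring

set_option maxHeartbeats 1000000 in
lemma keyB2 {w : ℝ} {n : ℕ} (hn : 1000 ≤ n) (hw : 1 + 1/(n:ℝ) ≤ w)
    (hu4 : w^(n+1) ≤ Real.exp 1 ^ 4) :
    ∃ d, 1 ≤ d ∧ d ≤ n ∧
      (1/100)*w*(w+1)*(w^(n+1)-1)^2
        ≤ (d:ℝ)^2*(w-1)^2*(w^d*(w^(n+1-d)-1)*(w*w^(n+1-d)-1)) := by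
  have hn1000 : (1000:ℝ) ≤ (n:ℝ) := by exact_mod_cast hn
  have hn0 : (0:ℝ) < (n:ℝ) := by linarith
  have hw1 : 1 < w := by
    have : 0 < 1/(n:ℝ) := by positivity
    linarith
  have hw0 : (0:ℝ) < w := by linarith
  set E := Real.exp 1 with hE
  have hE1 : (2.7182818283:ℝ) < E := Real.exp_one_gt_d9
  have hE2 : E < 2.7182818286 := Real.exp_one_lt_d9
  -- u ≥ e
  have hexp1 : Real.exp (1/((n:ℝ)+1)) ≤ 1 + 1/(n:ℝ) := by
    have a1 : 1 - 1/((n:ℝ)+1) ≤ Real.exp (-(1/((n:ℝ)+1))) := by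
      have := Real.add_one_le_exp (-(1/((n:ℝ)+1)))
      linarith
    have a2 : (0:ℝ) < 1 - 1/((n:ℝ)+1) := by
      rw [sub_pos, div_lt_one (by linarith)]
      linarith
    rw [Real.exp_neg] at a1
    have a3 : (Real.exp (1/((n:ℝ)+1)))⁻¹⁻¹ ≤ (1 - 1/((n:ℝ)+1))⁻¹ :=
      inv_anti₀ a2 a1
    rw [inv_inv] at a3
    have a4 : (1 - 1/((n:ℝ)+1))⁻¹ = 1 + 1/(n:ℝ) := by
      field_simp
      rw [add_sub_cancel_right]; exact div_self hn0.ne'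
    linarith [a4 ▸ a3]
  have huE : E ≤ w^(n+1) := by
    have b1 : E = Real.exp (1/((n:ℝ)+1)) ^ (n+1) := by
      rw [← Real.exp_nat_mul]
      congr 1
      field_simp
      rw [hE, Nat.cast_succ, div_self (by positivity)]
    have b2 : Real.exp (1/((n:ℝ)+1)) ^ (n+1) ≤ (1 + 1/(n:ℝ)) ^ (n+1) :=
      pow_le_pow_left₀ (Real.exp_pos _).le hexp1 (n+1)
    have b3 : (1 + 1/(n:ℝ)) ^ (n+1) ≤ w ^ (n+1) :=
      pow_le_pow_left₀ (by positivity) hw (n+1)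
    rw [b1]; exact le_trans b2 b3
  -- log bounds
  have hlogw : Real.log w ≤ 4/((n:ℝ)+1) := by
    have c1 : Real.log (w^(n+1)) ≤ Real.log (E^4) :=
      Real.log_le_log (pow_pos hw0 _) hu4
    rw [Real.log_pow, Real.log_pow, hE, Real.log_exp] at c1
    push_cast at c1
    have : ((n:ℝ)+1) > 0 := by linarith
    rw [le_div_iff₀ this]
    linarith
  have hlogw0 : 0 ≤ Real.log w := Real.log_nonneg (by linarith)
  have hwsmall : w ≤ 1.005 := by
    have d1 : Real.log w ≤ 0.004 := by
      have : (4:ℝ)/((n:ℝ)+1) ≤ 0.004 := by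
        rw [div_le_iff₀ (by linarith)]
        linarith
      linarith
    have d2 : w = Real.exp (Real.log w) := (Real.exp_log hw0).symm
    have d3 : Real.exp (Real.log w) ≤ Real.exp 0.004 := Real.exp_le_exp.2 d1
    have d4 : Real.exp (0.004:ℝ) ≤ 1.005 := by
      have e1 : 1 - (0.004:ℝ) ≤ Real.exp (-(0.004:ℝ)) := by
        have := Real.add_one_le_exp (-(0.004:ℝ)); linarith
      rw [Real.exp_neg] at e1
      have e2 : (0:ℝ) < Real.exp (0.004:ℝ) := Real.exp_pos _
      rw [le_inv_comm₀ (by norm_num) e2] at e1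
      linarith
    linarith [d2 ▸ le_trans d3 d4]
  set d := (n+1)/2 with hdd
  have hd1 : 1 ≤ d := by omega
  have hdn : d ≤ n := by omega
  set m := n + 1 - d with hmm
  have hdm : d ≤ m := by omega
  have hmd1 : m ≤ d + 1 := by omega
  have h2d : n ≤ 2*d := by omega
  set y := w^d with hy
  set z := w^m with hz
  have hy0 : (0:ℝ) < y := pow_pos hw0 _
  have hz0 : (0:ℝ) < z := pow_pos hw0 _
  have hy1 : (1:ℝ) ≤ y := by
    rw [hy]
    exact one_le_pow₀ hw1.le
  have hyz : y ≤ z := pow_le_pow_right₀ hw1.le hdm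
  have hzyw : z ≤ y*w := by
    have : w^m ≤ w^(d+1) := pow_le_pow_right₀ hw1.le hmd1
    rw [pow_succ] at this
    rw [hy, hz]
    linarith
  have huyz : w^(n+1) = y * z := by rw [hy, hz, ← pow_add]; congr 1; omega
  -- key log bound: 0.498 ≤ d (w-1)
  have hloguE : (1:ℝ) ≤ ((n:ℝ)+1) * Real.log w := by
    have c1 : Real.log E ≤ Real.log (w^(n+1)) :=
      Real.log_le_log (Real.exp_pos 1) huE
    rw [hE, Real.log_exp, Real.log_pow] at c1
    push_cast at c1
    linarith
  have hdK : (498/1000 : ℝ) ≤ (d:ℝ) * (w - 1) := by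
    have k1 : ((n:ℝ)+1) ≤ 2*(d:ℝ) + 1 := by
      have : (n:ℝ) ≤ 2*(d:ℝ) := by exact_mod_cast h2d
      linarith
    have k2 : ((n:ℝ)+1) * Real.log w ≤ (2*(d:ℝ)+1) * Real.log w :=
      mul_le_mul_of_nonneg_right k1 hlogw0
    have k3 : Real.log w ≤ 0.004 := by
      have : (4:ℝ)/((n:ℝ)+1) ≤ 0.004 := by
        rw [div_le_iff₀ (by linarith)]
        linarith
      linarith
    have k4 : (498/1000 : ℝ) ≤ (d:ℝ) * Real.log w := by nlinarith
    have k5 : (d:ℝ) * Real.log w ≤ (d:ℝ) * (w-1) :=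
      mul_le_mul_of_nonneg_left (Real.log_le_sub_one_of_pos hw0) (Nat.cast_nonneg d)
    linarith
  have hyE2 : y ≤ (7.39 : ℝ) := by
    have m1 : y*y ≤ y*z := mul_le_mul_of_nonneg_left hyz hy0.le
    have m2 : y*z ≤ E^4 := huyz ▸ hu4
    have mE2 : E^2 ≤ (7.3890561:ℝ) := by nlinarith
    have m3 : E^4 ≤ (54.599:ℝ) := by nlinarith [mE2, sq_nonneg E]
    nlinarith [m1, m2, m3, hy0.le]
  -- pass to pure arithmetic
  refine ⟨d, hd1, hdn, ?_⟩
  rw [show w^(n+1) = y*z from huyz, show w^d = y from hy.symm,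
    show w^(n+1-d) = z from (by rw [hz, hmm] : z = w^(n+1-d)).symm]
  have hd0 : (1:ℝ) ≤ (d:ℝ) := by exact_mod_cast hd1
  clear_value y z d
  clear hy hz huyz huE hu4 hloguE hlogw hexp1 hE1 hE2 hE
  -- arithmetic finish
  have A0 : (0:ℝ) ≤ y*z - 1 := by nlinarith
  have A1 : y*z - 1 ≤ (y+1)*(z-1) := by nlinarith
  have A2 : (y*z-1)^2 ≤ ((y+1)*(z-1))^2 := by
    apply sq_le_sq' (by nlinarith) A1
  have step1 : (1/100)*(w+1)*(y+1)^2 ≤ (248/1000)*y := by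
    nlinarith [mul_nonneg (by linarith : (0:ℝ) ≤ y-1) (by linarith : (0:ℝ) ≤ 7.39 - y),
      sq_nonneg (y+1)]
  have A3 : w*(z-1) ≤ w*z - 1 := by nlinarith
  have hz1 : (0:ℝ) ≤ z - 1 := by linarith
  have hK2 : (248/1000 : ℝ) ≤ (d:ℝ)^2*(w-1)^2 := by nlinarith [hdK]
  calc (1/100)*w*(w+1)*(y*z-1)^2
      ≤ (1/100)*w*(w+1)*((y+1)*(z-1))^2 := by
        apply mul_le_mul_of_nonneg_left A2
        positivity
    _ = ((1/100)*(w+1)*(y+1)^2) * (w*(z-1)^2) := by ring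
    _ ≤ ((248/1000)*y) * (w*(z-1)^2) := by
        apply mul_le_mul_of_nonneg_right step1
        positivity
    _ = (248/1000) * (y*((z-1)*(w*(z-1)))) := by ring
    _ ≤ (248/1000) * (y*((z-1)*(w*z-1))) := by
        apply mul_le_mul_of_nonneg_left _ (by norm_num)
        apply mul_le_mul_of_nonneg_left _ hy0.le
        apply mul_le_mul_of_nonneg_left A3 hz1
    _ ≤ ((d:ℝ)^2*(w-1)^2) * (y*((z-1)*(w*z-1))) := by
        apply mul_le_mul_of_nonneg_right hK2
        apply mul_nonneg hy0.le
        apply mul_nonneg hz1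
        nlinarith
    _ = (d:ℝ)^2*(w-1)^2*(y*(z-1)*(w*z-1)) := by ring

lemma key {w : ℝ} {n : ℕ} (hn : 1000 ≤ n) (hw : 1 + 1/(n:ℝ) ≤ w) :
    (1/100)*w*(w^(n+1)-1)^2/(w-1)^4 ≤ aP n w * cP n w - bP n w ^ 2 := by
  have hn0 : (0:ℝ) < (n:ℝ) := by
    have : (1000:ℝ) ≤ (n:ℝ) := by exact_mod_cast hn
    linarith
  have hw1 : 1 < w := by
    have : 0 < 1/(n:ℝ) := by positivity
    linarith
  rcases le_or_gt 2 w with hA | hB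
  · exact D_ge' hw1 (le_refl 1) (by omega) (keyA (by omega) hA)
  · rcases le_or_gt (Real.exp 1 ^ 4) (w^(n+1)) with h1 | h2
    · obtain ⟨d, hd1, hdn, hK⟩ := keyB1 hw1 hB h1
      exact D_ge' hw1 hd1 hdn hK
    · obtain ⟨d, hd1, hdn, hK⟩ := keyB2 hn hw h2.le
      exact D_ge' hw1 hd1 hdn hK

lemma coeff_le :
    Real.sqrt (1 - Real.exp 1 / (Real.exp 1 - 1) ^ 2) / (8 * Real.sqrt 2) ≤ 1/40 := by
  set E := Real.exp 1 with hE
  have hE1 : (2.7182818283:ℝ) < E := Real.exp_one_gt_d9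
  have hE2 : E < 2.7182818286 := Real.exp_one_lt_d9
  have hfrac : (23:ℝ)*(E-1)^2 ≤ 25*E := by nlinarith
  have hEm1 : (0:ℝ) < (E-1)^2 := by nlinarith
  have halpha : 1 - E/(E-1)^2 ≤ 2/25 := by
    have : (23:ℝ)/25 ≤ E/(E-1)^2 := by
      rw [div_le_div_iff₀ (by norm_num) hEm1]
      linarith
    linarith
  have hsq : Real.sqrt (1 - E/(E-1)^2) ≤ Real.sqrt (2/25) := Real.sqrt_le_sqrt halpha
  have h25 : Real.sqrt 25 = 5 := by
    rw [show (25:ℝ) = 5^2 by norm_num]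
    exact Real.sqrt_sq (by norm_num)
  have h225 : Real.sqrt ((2:ℝ)/25) = Real.sqrt 2 / 5 := by
    rw [Real.sqrt_div (by norm_num) 25, h25]
  have hs2 : (0:ℝ) < Real.sqrt 2 := Real.sqrt_pos.2 (by norm_num)
  have heq : (Real.sqrt 2/5)/(8*Real.sqrt 2) = 1/40 := by
    field_simp
    ring
  calc Real.sqrt (1 - E/(E-1)^2) / (8*Real.sqrt 2)
      ≤ (Real.sqrt 2/5)/(8*Real.sqrt 2) := by
        apply div_le_div_of_nonneg_right (h225 ▸ hsq) (by positivity)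
    _ = 1/40 := heq
/-- With `α = 1 − e/(e−1)²`, for all sufficiently large `n` and all
`w ≥ 1 + 1/n`, `Fₙ(w) ≥ (√α/(8√2)) n/(√w (w − 1))`. -/
theorem F_lower_bound :
    ∃ N : ℕ, ∀ n : ℕ, N ≤ n → ∀ w : ℝ, 1 + 1 / (n : ℝ) ≤ w →
      (Real.sqrt (1 - Real.exp 1 / (Real.exp 1 - 1) ^ 2) / (8 * Real.sqrt 2)) *
          ((n : ℝ) / (Real.sqrt w * (w - 1))) ≤ F n w := by
  refine ⟨1000, fun n hn w hw => ?_⟩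
  have hn1000 : (1000:ℝ) ≤ (n:ℝ) := by exact_mod_cast hn
  have hn0 : (0:ℝ) < (n:ℝ) := by linarith
  have hw1 : 1 < w := by
    have : 0 < 1/(n:ℝ) := by positivity
    linarith
  have hw0 : (0:ℝ) < w := by linarith
  have ht0 : (0:ℝ) < w - 1 := by linarith
  have hs0 : (0:ℝ) < Real.sqrt w := Real.sqrt_pos.2 hw0
  set a := aP n w with ha
  set b := bP n w with hb
  set c := cP n w with hc
  have ha0 : 0 < a := aP_pos hw0 n
  set Dv := a * c - b^2 with hDv
  have hDv0 : 0 ≤ Dv := by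
    have := cs_ineq hw0.le n
    rw [hDv]; linarith
  have hb2 : (n:ℝ) * a ≤ 2 * b := half_le hw1.le n
  have hb0 : 0 ≤ b := by nlinarith
  have hD : (1/100)*w*(w^(n+1)-1)^2/(w-1)^4 ≤ Dv := key hn hw
  set u := w^(n+1) with hu
  have hu1 : 1 ≤ u := one_le_pow₀ hw1.le
  set s := Real.sqrt w with hs
  have hss : s^2 = w := Real.sq_sqrt hw0.le
  set G := (1/10)*s*(u-1)/(w-1)^2 with hG
  have hG0 : 0 ≤ G := by
    apply div_nonneg _ (by positivity)
    have : 0 ≤ u - 1 := by linarith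
    positivity
  have hGsq : G^2 = (1/100)*w*(u-1)^2/(w-1)^4 := by
    rw [hG, div_pow]
    congr 1
    · rw [mul_pow, mul_pow, hss]; ring
    · ring
  have h2 : G ≤ Real.sqrt Dv := by
    rw [show G = Real.sqrt (G^2) from (Real.sqrt_sq hG0).symm]
    apply Real.sqrt_le_sqrt
    rw [hGsq]
    exact hD
  have h1 : b * Real.sqrt Dv ≤ Real.sqrt (a*c*Dv) := by
    have e1 : b * Real.sqrt Dv = Real.sqrt (b^2 * Dv) := by
      rw [Real.sqrt_mul (sq_nonneg b), Real.sqrt_sq hb0]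
    rw [e1]
    apply Real.sqrt_le_sqrt
    apply mul_le_mul_of_nonneg_right _ hDv0
    have := cs_ineq hw0.le n
    linarith
  have h3 : (n:ℝ)/2 * a * G ≤ b * Real.sqrt Dv := by
    apply mul_le_mul (by linarith) h2 hG0 hb0
  have hnum : (n:ℝ)/2 * a * G ≤ Real.sqrt (a*c*Dv) := le_trans h3 h1
  have hden : (0:ℝ) < 2 * w * a^2 := by positivity
  have hmain : ((n:ℝ)/2 * a * G) / (2*w*a^2) ≤ F n w := by
    rw [F]
    exact div_le_div_of_nonneg_right hnum hden.le
  -- identify the left side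
  have hua : u - 1 = a * (w - 1) := by
    rw [ha, aP_eq (ne_of_gt hw1), hu]
    field_simp
  have hfin : (n:ℝ)/(40*(s*(w-1))) = ((n:ℝ)/2 * a * G) / (2*w*a^2) := by
    rw [hG, hua]
    rw [← hss]
    have hsne : s ≠ 0 := ne_of_gt hs0
    have hwne : s^2 - 1 ≠ 0 := by rw [hss]; exact ne_of_gt ht0
    have hane : a ≠ 0 := ne_of_gt ha0
    field_simp
    ring
  have hcoe : Real.sqrt (1 - Real.exp 1 / (Real.exp 1 - 1) ^ 2) / (8 * Real.sqrt 2) *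
      ((n:ℝ) / (s * (w - 1))) ≤ (1/40) * ((n:ℝ) / (s * (w-1))) := by
    apply mul_le_mul_of_nonneg_right coeff_le
    positivity
  have heq2 : (1/40) * ((n:ℝ) / (s * (w-1))) = (n:ℝ)/(40*(s*(w-1))) := by
    field_simp
  calc Real.sqrt (1 - Real.exp 1 / (Real.exp 1 - 1) ^ 2) / (8 * Real.sqrt 2) *
      ((n:ℝ) / (s * (w - 1)))
      ≤ (1/40) * ((n:ℝ) / (s * (w-1))) := hcoe
    _ = (n:ℝ)/(40*(s*(w-1))) := heq2
    _ = ((n:ℝ)/2 * a * G) / (2*w*a^2) := hfin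
    _ ≤ F n w := hmain
end
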